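/- arXiv:2301.11048 — 2 statements merged into one kernel-verified Lean document; each statement's English description precedes it below -/
import Mathlib

section
/- In a finite digraph G, if the poset of paths in G under the subpath order contains an infinite antichain (i.e., is not wqo), then for any family of objects mapped surjectively-compatibly onto these paths the corresponding family is an antichain. Concretely: if π_1, π_2, ... are pairwise subpath-incomparable paths in the factor graph Γ_B, and σ_i are equivalence relations with window sequence Π(σ_i) = π_i, then the σ_i are pairwise incomparable under consecutive embedding; hence Av(B) is not wqo. -/
/-- A finite equivalence relation on a linearly ordered set `{0,...,n-1}`. -/
def EqRel : Type := (n : ℕ) × Setoid (Fin n)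

/-- The consecutive embedding order. -/
def ConsLE (a b : EqRel) : Prop :=
  ∃ k, k + a.1 ≤ b.1 ∧
    ∀ (x y : Fin a.1) (hx : k + x.1 < b.1) (hy : k + y.1 < b.1),
      (a.2.r x y ↔ b.2.r ⟨k + x.1, hx⟩ ⟨k + y.1, hy⟩)

/-- The avoidance set of `B` under the consecutive embedding order. -/
def Av (B : Set EqRel) : Set EqRel := {τ | ∀ β ∈ B, ¬ ConsLE β τ}

/-- Length-`b` window of `ρ` starting at position `i`. -/
def window {n : ℕ} (ρ : Setoid (Fin n)) (b i : ℕ) (h : i + b ≤ n) : Setoid (Fin b) where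
  r x y := ρ.r ⟨i + x.1, by have := x.isLt; omega⟩ ⟨i + y.1, by have := y.isLt; omega⟩
  iseqv :=
    { refl := fun x => ρ.iseqv.refl _
      symm := fun h => ρ.iseqv.symm h
      trans := fun h1 h2 => ρ.iseqv.trans h1 h2 }

/-- The window sequence `Π(ρ)` of all length-`b` windows of `ρ`. -/
def windows {n : ℕ} (ρ : Setoid (Fin n)) (b : ℕ) (h : b ≤ n) : List (Setoid (Fin b)) :=
  List.ofFn fun i : Fin (n - b + 1) => window ρ b i.1 (by have := i.isLt; omega)

theorem windows_infix (b : ℕ) (a c : EqRel) (ha : b ≤ a.1) (hc : b ≤ c.1)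
    (h : ConsLE a c) : windows a.2 b ha <:+: windows c.2 b hc := by
  obtain ⟨k, hk, hw⟩ := h
  have heq : windows a.2 b ha = ((windows c.2 b hc).drop k).take (a.1 - b + 1) := by
    apply List.ext_getElem
    · simp only [windows, List.length_take, List.length_drop, List.length_ofFn]
      omega
    · intro i h1 h2
      have hi : i < a.1 - b + 1 := by
        simpa [windows, List.length_ofFn] using h1
      have hki : k + i < c.1 - b + 1 := by omega
      simp only [windows, List.getElem_take, List.getElem_drop, List.getElem_ofFn]
      apply Setoid.ext
      intro x y
      show a.2.r ⟨i + x.1, _⟩ ⟨i + y.1, _⟩ ↔ c.2.r ⟨k + i + x.1, _⟩ ⟨k + i + y.1, _⟩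
      have hx' : i + x.1 < a.1 := by have := x.isLt; omega
      have hy' : i + y.1 < a.1 := by have := y.isLt; omega
      have hx2 : k + (i + x.1) < c.1 := by omega
      have hy2 : k + (i + y.1) < c.1 := by omega
      have := hw ⟨i + x.1, hx'⟩ ⟨i + y.1, hy'⟩ hx2 hy2
      convert this using 2 <;> (apply Fin.ext; simp; omega)
  rw [heq]
  exact ((List.take_prefix _ _).isInfix).trans ((List.drop_suffix _ _).isInfix)

/-- If `σ₁, σ₂, ...` are members of `Av B` of length at least `b` whose window paths
`Π(σ_i)` are pairwise subpath-incomparable, then the `σ_i` are pairwise incomparable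
under consecutive embedding; hence `Av B` is not well quasi-ordered. -/
theorem antichain_of_window_antichain (b : ℕ) (hb : 0 < b) (B : Set EqRel)
    (σ : ℕ → EqRel) (hlen : ∀ i, b ≤ (σ i).1) (hmem : ∀ i, σ i ∈ Av B)
    (hanti : ∀ i j, i ≠ j →
      ¬ (windows (σ i).2 b (hlen i) <:+: windows (σ j).2 b (hlen j))) :
    (∀ i j, i ≠ j → ¬ ConsLE (σ i) (σ j)) ∧
      ¬ ∀ f : ℕ → EqRel, (∀ n, f n ∈ Av B) → ∃ i j, i < j ∧ ConsLE (f i) (f j) := by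
  have main : ∀ i j, i ≠ j → ¬ ConsLE (σ i) (σ j) := by
    intro i j hij hle
    exact hanti i j hij (windows_infix b (σ i) (σ j) (hlen i) (hlen j) hle)
  refine ⟨main, fun h => ?_⟩
  obtain ⟨i, j, hij, hle⟩ := h σ hmem
  exact main i j (Nat.ne_of_lt hij) hle
end

section
/- Let B be a finite set of equivalence relations on linearly ordered sets, each of length at most b, and let C = Av(B) under the consecutive embedding order. If for every two elements σ, ρ of C of length ≥ b there is a common extension in C (i.e., C restricted to lengths ≥ b has the JEP), and if every element of C of length < b consecutively embeds into some element of C of length exactly b, then C is atomic. -/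
theorem consLE_trans {a c d : EqRel} (h1 : ConsLE a c) (h2 : ConsLE c d) :
    ConsLE a d := by
  obtain ⟨k, hk, hrel⟩ := h1
  obtain ⟨k', hk', hrel'⟩ := h2
  refine ⟨k' + k, by omega, ?_⟩
  intro x y hx hy
  have hxc : k + x.1 < c.1 := by have := x.2; omega
  have hyc : k + y.1 < c.1 := by have := y.2; omega
  have hxd : k' + (k + x.1) < d.1 := by omega
  have hyd : k' + (k + y.1) < d.1 := by omega
  have := hrel' ⟨k + x.1, hxc⟩ ⟨k + y.1, hyc⟩ hxd hyd
  rw [hrel x y hxc hyc, this]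
  constructor <;> intro h <;>
    (convert h using 2 <;> simp <;> omega)

theorem consLE_refl (a : EqRel) : ConsLE a a := by
  refine ⟨0, by omega, ?_⟩
  intro x y hx hy
  constructor <;> intro h <;>
    (convert h using 2 <;> simp)

/-- Let `B` be a finite set of relations of length at most `b` and `C = Av(B)`.
If `C` restricted to lengths `≥ b` has the joint embedding property, and every
member of `C` of length `< b` consecutively embeds in a member of `C` of length
exactly `b`, then `C` is atomic. -/
theorem av_atomic_of_jep_on_long (b : ℕ) (B : Set EqRel) (hBfin : B.Finite)
    (hBlen : ∀ β ∈ B, β.1 ≤ b)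
    (h₁ : ∀ σ ∈ Av B, ∀ ρ ∈ Av B, b ≤ σ.1 → b ≤ ρ.1 →
      ∃ θ ∈ Av B, ConsLE σ θ ∧ ConsLE ρ θ)
    (h₂ : ∀ σ ∈ Av B, σ.1 < b → ∃ ρ ∈ Av B, ρ.1 = b ∧ ConsLE σ ρ) :
    ∀ σ ∈ Av B, ∀ ρ ∈ Av B, ∃ θ ∈ Av B, ConsLE σ θ ∧ ConsLE ρ θ := by
  intro σ hσ ρ hρ
  -- extend each to a member of length ≥ b
  have ext : ∀ τ ∈ Av B, ∃ τ' ∈ Av B, b ≤ τ'.1 ∧ ConsLE τ τ' := by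
    intro τ hτ
    by_cases h : b ≤ τ.1
    · exact ⟨τ, hτ, h, consLE_refl τ⟩
    · obtain ⟨τ', hτ', hlen, hle⟩ := h₂ τ hτ (by omega)
      exact ⟨τ', hτ', by omega, hle⟩
  obtain ⟨σ', hσ', hσb, hσle⟩ := ext σ hσ
  obtain ⟨ρ', hρ', hρb, hρle⟩ := ext ρ hρ
  obtain ⟨θ, hθ, h1, h2⟩ := h₁ σ' hσ' ρ' hρ' hσb hρb
  exact ⟨θ, hθ, consLE_trans hσle h1, consLE_trans hρle h2⟩
end
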